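/- arXiv:1303.6831 — 2 statements merged into one kernel-verified Lean document; each statement's English description precedes it below -/
import Mathlib

section
/- For the discrete-time quantum walk with coin U^S(α,β,γ) and initial state |Ψ₀⟩ = (1/√2)|0⟩(|↓⟩ + i|↑⟩), the quantity P_R − P_L after t steps has the form M(β,t)·sin(α+γ), where M(β,t) depends only on β and t (not on α and γ individually). -/
open Complex

/-- One step of the discrete-time quantum walk `W = S (I ⊗ U)` on amplitudes
`ψ : ℤ → Fin 2 → ℂ`, where `ψ x 0` is the `|↑⟩` (right-moving) amplitude at site `x`
and `ψ x 1` the `|↓⟩` (left-moving) one: first the coin `U` acts, then the shift. -/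
noncomputable def qwStep (U : Matrix (Fin 2) (Fin 2) ℂ) (ψ : ℤ → Fin 2 → ℂ) :
    ℤ → Fin 2 → ℂ :=
  fun x c => if c = 0 then U.mulVec (ψ (x - 1)) 0 else U.mulVec (ψ (x + 1)) 1

/-- The probability of finding the walker at site `x`. -/
noncomputable def prob (ψ : ℤ → Fin 2 → ℂ) (x : ℤ) : ℝ := ∑ c : Fin 2, ‖ψ x c‖ ^ 2

/-- Total probability strictly to the right of the origin. -/
noncomputable def PR (ψ : ℤ → Fin 2 → ℂ) : ℝ := ∑' x : {x : ℤ // 0 < x}, prob ψ x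

/-- Total probability strictly to the left of the origin. -/
noncomputable def PL (ψ : ℤ → Fin 2 → ℂ) : ℝ := ∑' x : {x : ℤ // x < 0}, prob ψ x

/-- The initial state `(1/√2)|0⟩(|↓⟩ + i|↑⟩)`. -/
noncomputable def ψinit : ℤ → Fin 2 → ℂ :=
  fun x => if x = 0 then ![I / Real.sqrt 2, 1 / Real.sqrt 2] else 0

/-- The SU(2) coin `U^S(α,β,γ)`. -/
noncomputable def USU (α β γ : ℝ) : Matrix (Fin 2) (Fin 2) ℂ :=
  !![exp ((α : ℂ) * I) * (Real.cos β : ℂ), -exp (-(γ : ℂ) * I) * (Real.sin β : ℂ);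
     exp ((γ : ℂ) * I) * (Real.sin β : ℂ), exp (-(α : ℂ) * I) * (Real.cos β : ℂ)]

lemma qwStep_apply0 (U : Matrix (Fin 2) (Fin 2) ℂ) (ψ : ℤ → Fin 2 → ℂ) (x : ℤ) :
    qwStep U ψ x 0 = U 0 0 * ψ (x - 1) 0 + U 0 1 * ψ (x - 1) 1 := by
  simp [qwStep, Matrix.mulVec, dotProduct, Fin.sum_univ_two]

lemma qwStep_apply1 (U : Matrix (Fin 2) (Fin 2) ℂ) (ψ : ℤ → Fin 2 → ℂ) (x : ℤ) :
    qwStep U ψ x 1 = U 1 0 * ψ (x + 1) 0 + U 1 1 * ψ (x + 1) 1 := by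
  simp [qwStep, Matrix.mulVec, dotProduct, Fin.sum_univ_two]

lemma USU_zero (β : ℝ) : USU 0 β 0 =
    !![(Real.cos β : ℂ), -(Real.sin β : ℂ); (Real.sin β : ℂ), (Real.cos β : ℂ)] := by
  simp [USU]

noncomputable def ph (α γ : ℝ) (x : ℤ) (cn : ℕ) : ℂ :=
  exp (((α * x + (α + γ) * cn : ℝ) : ℂ) * I)

lemma ph_mul (α γ : ℝ) (r : ℝ) (x : ℤ) (cn : ℕ) (y : ℤ) (dn : ℕ)
    (h : r + (α * x + (α + γ) * cn) = α * y + (α + γ) * dn) :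
    exp ((r : ℂ) * I) * ph α γ x cn = ph α γ y dn := by
  rw [ph, ph, ← Complex.exp_add, ← add_mul, ← Complex.ofReal_add, h]

lemma qwGauge (α β γ : ℝ) (ψ : ℤ → Fin 2 → ℂ) :
    qwStep (USU α β γ) (fun x c => ph α γ x c.val * ψ x c)
      = fun x c => ph α γ x c.val * qwStep (USU 0 β 0) ψ x c := by
  funext x c
  have h1 := ph_mul α γ α (x-1) 0 x 0 (by push_cast; ring)
  have h2 := ph_mul α γ (-γ) (x-1) 1 x 0 (by push_cast; ring)
  have h3 := ph_mul α γ γ (x+1) 0 x 1 (by push_cast; ring)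
  have h4 := ph_mul α γ (-α) (x+1) 1 x 1 (by push_cast; ring)
  fin_cases c
  · simp only [Fin.isValue, Fin.zero_eta]
    rw [qwStep_apply0, qwStep_apply0, USU_zero, USU]
    simp only [Matrix.of_apply, Matrix.cons_val', Matrix.cons_val_zero, Matrix.cons_val_one,
      Matrix.head_cons, Matrix.empty_val', Matrix.cons_val_fin_one, Matrix.head_fin_const,
      Fin.isValue, Fin.val_zero, Fin.val_one]
    push_cast at h1 h2
    linear_combination ((Real.cos β : ℂ) * ψ (x-1) 0) * h1 - ((Real.sin β : ℂ) * ψ (x-1) 1) * h2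
  · simp only [Fin.isValue, Fin.mk_one]
    rw [qwStep_apply1, qwStep_apply1, USU_zero, USU]
    simp only [Matrix.of_apply, Matrix.cons_val', Matrix.cons_val_zero, Matrix.cons_val_one,
      Matrix.head_cons, Matrix.empty_val', Matrix.cons_val_fin_one, Matrix.head_fin_const,
      Fin.isValue, Fin.val_zero, Fin.val_one]
    push_cast at h3 h4
    linear_combination ((Real.sin β : ℂ) * ψ (x+1) 0) * h3 + ((Real.cos β : ℂ) * ψ (x+1) 1) * h4

noncomputable def phi0 : ℤ → Fin 2 → ℂ := fun x => if x = 0 then ![1, 0] else 0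
noncomputable def phi1 : ℤ → Fin 2 → ℂ := fun x => if x = 0 then ![0, 1] else 0

lemma qwStep_lin (U : Matrix (Fin 2) (Fin 2) ℂ) (a b : ℂ) (ψ φ : ℤ → Fin 2 → ℂ) :
    qwStep U (fun x c => a * ψ x c + b * φ x c)
      = fun x c => a * qwStep U ψ x c + b * qwStep U φ x c := by
  funext x c
  fin_cases c
  · simp only [Fin.isValue, Fin.zero_eta]
    rw [qwStep_apply0, qwStep_apply0, qwStep_apply0]; ring
  · simp only [Fin.isValue, Fin.mk_one]
    rw [qwStep_apply1, qwStep_apply1, qwStep_apply1]; ring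

lemma qwStep_lin_iter (U : Matrix (Fin 2) (Fin 2) ℂ) (a b : ℂ) (ψ φ : ℤ → Fin 2 → ℂ) (t : ℕ) :
    (qwStep U)^[t] (fun x c => a * ψ x c + b * φ x c)
      = fun x c => a * (qwStep U)^[t] ψ x c + b * (qwStep U)^[t] φ x c := by
  induction t with
  | zero => simp
  | succ t ih =>
      rw [Function.iterate_succ_apply', ih, qwStep_lin]
      simp only [Function.iterate_succ_apply']

lemma qwGauge_iter (α β γ : ℝ) (ψ : ℤ → Fin 2 → ℂ) (t : ℕ) :
    (qwStep (USU α β γ))^[t] (fun x c => ph α γ x c.val * ψ x c)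
      = fun x c => ph α γ x c.val * (qwStep (USU 0 β 0))^[t] ψ x c := by
  induction t with
  | zero => simp
  | succ t ih =>
      rw [Function.iterate_succ_apply', ih, qwGauge]
      simp only [Function.iterate_succ_apply']

/-- reflection symmetry operator -/
noncomputable def Sw (ψ : ℤ → Fin 2 → ℂ) : ℤ → Fin 2 → ℂ :=
  fun x c => if c = 0 then -ψ (-x) 1 else ψ (-x) 0

lemma Sw_apply0 (ψ : ℤ → Fin 2 → ℂ) (x : ℤ) : Sw ψ x 0 = -ψ (-x) 1 := by simp [Sw]
lemma Sw_apply1 (ψ : ℤ → Fin 2 → ℂ) (x : ℤ) : Sw ψ x 1 = ψ (-x) 0 := by simp [Sw]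

lemma qwSwap (β : ℝ) (ψ : ℤ → Fin 2 → ℂ) :
    qwStep (USU 0 β 0) (Sw ψ) = Sw (qwStep (USU 0 β 0) ψ) := by
  funext x c
  fin_cases c
  · simp only [Fin.isValue, Fin.zero_eta]
    rw [qwStep_apply0, Sw_apply0 ψ (x-1), Sw_apply1 ψ (x-1), Sw_apply0, qwStep_apply1, USU_zero]
    simp only [Matrix.of_apply, Matrix.cons_val', Matrix.cons_val_zero, Matrix.cons_val_one,
      Matrix.head_cons, Matrix.empty_val', Matrix.cons_val_fin_one, Matrix.head_fin_const]
    rw [show -(x-1) = -x+1 by ring]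
    ring
  · simp only [Fin.isValue, Fin.mk_one]
    rw [qwStep_apply1, Sw_apply0 ψ (x+1), Sw_apply1 ψ (x+1), Sw_apply1, qwStep_apply0, USU_zero]
    simp only [Matrix.of_apply, Matrix.cons_val', Matrix.cons_val_zero, Matrix.cons_val_one,
      Matrix.head_cons, Matrix.empty_val', Matrix.cons_val_fin_one, Matrix.head_fin_const]
    rw [show -(x+1) = -x-1 by ring]
    ring

lemma Sw_phi0 : Sw phi0 = phi1 := by
  funext x c
  fin_cases c
  · simp only [Fin.isValue, Fin.zero_eta]
    rw [Sw_apply0]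
    simp only [phi0, phi1, neg_eq_zero]
    by_cases h : x = 0 <;> simp [h]
  · simp only [Fin.isValue, Fin.mk_one]
    rw [Sw_apply1]
    simp only [phi0, phi1, neg_eq_zero]
    by_cases h : x = 0 <;> simp [h]

noncomputable def Ff (β : ℝ) (t : ℕ) : ℤ → Fin 2 → ℂ := (qwStep (USU 0 β 0))^[t] phi0
noncomputable def Gf (β : ℝ) (t : ℕ) : ℤ → Fin 2 → ℂ := (qwStep (USU 0 β 0))^[t] phi1

lemma Gf_eq_Sw (β : ℝ) (t : ℕ) : Gf β t = Sw (Ff β t) := by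
  rw [Gf, Ff, ← Sw_phi0]
  induction t with
  | zero => simp
  | succ t ih =>
      rw [Function.iterate_succ_apply', Function.iterate_succ_apply', ih, qwSwap]

lemma qwStep_real (β : ℝ) (ψ : ℤ → Fin 2 → ℂ) (h : ∀ x c, (ψ x c).im = 0) :
    ∀ x c, (qwStep (USU 0 β 0) ψ x c).im = 0 := by
  intro x c
  fin_cases c
  · simp only [Fin.isValue, Fin.zero_eta]
    rw [qwStep_apply0, USU_zero]
    simp only [Matrix.of_apply, Matrix.cons_val', Matrix.cons_val_zero, Matrix.cons_val_one,
      Matrix.head_cons, Matrix.empty_val', Matrix.cons_val_fin_one, Matrix.head_fin_const]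
    simp [Complex.add_im, Complex.mul_im, h]
  · simp only [Fin.isValue, Fin.mk_one]
    rw [qwStep_apply1, USU_zero]
    simp only [Matrix.of_apply, Matrix.cons_val', Matrix.cons_val_zero, Matrix.cons_val_one,
      Matrix.head_cons, Matrix.empty_val', Matrix.cons_val_fin_one, Matrix.head_fin_const]
    simp [Complex.add_im, Complex.mul_im, h]

lemma Ff_real (β : ℝ) (t : ℕ) : ∀ x c, (Ff β t x c).im = 0 := by
  rw [Ff]
  induction t with
  | zero =>
      intro x c
      simp only [Function.iterate_zero_apply, phi0]
      by_cases h : x = 0 <;> fin_cases c <;> simp [h]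
  | succ t ih =>
      rw [Function.iterate_succ_apply']
      exact qwStep_real β _ ih

lemma Gf_real (β : ℝ) (t : ℕ) : ∀ x c, (Gf β t x c).im = 0 := by
  intro x c
  rw [Gf_eq_Sw]
  fin_cases c
  · simp only [Fin.isValue, Fin.zero_eta]
    rw [Sw_apply0]
    simp [Ff_real]
  · simp only [Fin.isValue, Fin.mk_one]
    rw [Sw_apply1]
    simp [Ff_real]

lemma qwStep_supp (U : Matrix (Fin 2) (Fin 2) ℂ) (ψ : ℤ → Fin 2 → ℂ)
    (h0 : ∀ x : ℤ, x ≠ 0 → ψ x = 0) :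
    ∀ (t : ℕ) (x : ℤ), (t : ℤ) < |x| → (qwStep U)^[t] ψ x = 0 := by
  intro t
  induction t with
  | zero =>
      intro x hx
      simp only [Function.iterate_zero_apply]
      apply h0
      intro h; rw [h] at hx; simp at hx
  | succ t ih =>
      intro x hx
      rw [Function.iterate_succ_apply']
      have h1 : (qwStep U)^[t] ψ (x - 1) = 0 := by
        apply ih
        rcases abs_cases x with ⟨e1, e2⟩ | ⟨e1, e2⟩ <;>
          rcases abs_cases (x - 1) with ⟨f1, f2⟩ | ⟨f1, f2⟩ <;> omega
      have h2 : (qwStep U)^[t] ψ (x + 1) = 0 := by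
        apply ih
        rcases abs_cases x with ⟨e1, e2⟩ | ⟨e1, e2⟩ <;>
          rcases abs_cases (x + 1) with ⟨f1, f2⟩ | ⟨f1, f2⟩ <;> omega
      funext c
      fin_cases c
      · simp only [Fin.isValue, Fin.zero_eta]
        rw [qwStep_apply0, h1]
        simp
      · simp only [Fin.isValue, Fin.mk_one]
        rw [qwStep_apply1, h2]
        simp

lemma exp_neg_theta (θ : ℝ) : exp (-(θ : ℂ) * I) = (Real.cos θ : ℂ) - (Real.sin θ : ℂ) * I := by
  rw [Complex.exp_mul_I, Complex.cos_neg, Complex.sin_neg, Complex.ofReal_cos,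
    Complex.ofReal_sin]
  ring

lemma norm_formula (θ a b : ℝ) :
    ‖I * ((Real.sqrt 2 : ℝ) : ℂ)⁻¹ * (a : ℂ) + exp (-(θ : ℂ) * I) * ((Real.sqrt 2 : ℝ) : ℂ)⁻¹ * (b : ℂ)‖ ^ 2
      = (a ^ 2 + b ^ 2) / 2 - Real.sin θ * (a * b) := by
  rw [exp_neg_theta]
  rw [show ((Real.sqrt 2 : ℝ) : ℂ)⁻¹ = (((Real.sqrt 2)⁻¹ : ℝ) : ℂ) by push_cast; ring]
  rw [Complex.sq_norm, Complex.normSq_apply]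
  simp only [Complex.add_re, Complex.mul_re, Complex.mul_im, Complex.add_im, Complex.I_re,
    Complex.I_im, Complex.sub_re, Complex.sub_im, Complex.ofReal_re, Complex.ofReal_im]
  have hpy := Real.sin_sq_add_cos_sq θ
  have hu : ((Real.sqrt 2)⁻¹ : ℝ) ^ 2 = 1 / 2 := by
    rw [← Real.sqrt_inv]
    rw [Real.sq_sqrt] <;> norm_num
  linear_combination ((Real.sqrt 2)⁻¹ ^ 2 * b ^ 2) * hpy +
    (a ^ 2 + b ^ 2 - 2 * a * b * Real.sin θ) * hu

noncomputable def psin (α γ : ℝ) : ℤ → Fin 2 → ℂ :=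
  fun x c => (I * ((Real.sqrt 2 : ℝ) : ℂ)⁻¹) * phi0 x c +
    (exp (-((α + γ : ℝ) : ℂ) * I) * ((Real.sqrt 2 : ℝ) : ℂ)⁻¹) * phi1 x c

lemma psiinit_decomp (α γ : ℝ) :
    ψinit = fun x c => ph α γ x c.val * psin α γ x c := by
  funext x c
  by_cases h : x = 0
  · subst h
    fin_cases c
    · simp only [Fin.isValue, Fin.zero_eta, Fin.val_zero]
      rw [show ph α γ 0 0 = 1 by simp [ph]]
      simp [ψinit, psin, phi0, phi1, div_eq_mul_inv, mul_comm]
    · simp only [Fin.isValue, Fin.mk_one, Fin.val_one]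
      rw [show ph α γ 0 1 = exp (((α + γ : ℝ) : ℂ) * I) by simp [ph]]
      simp only [ψinit, psin, phi0, phi1, reduceIte, Matrix.cons_val_one, Matrix.head_cons,
        Matrix.cons_val_zero]
      have he : exp (((α + γ : ℝ) : ℂ) * I) * exp (-((α + γ : ℝ) : ℂ) * I) = 1 := by
        rw [← Complex.exp_add]; ring_nf; exact Complex.exp_zero
      linear_combination (-(((Real.sqrt 2 : ℝ) : ℂ))⁻¹) * he
  · simp [ψinit, psin, phi0, phi1, h]

lemma amp (α β γ : ℝ) (t : ℕ) :
    (qwStep (USU α β γ))^[t] ψinit = fun x c => ph α γ x c.val *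
      ((I * ((Real.sqrt 2 : ℝ) : ℂ)⁻¹) * Ff β t x c +
        (exp (-((α + γ : ℝ) : ℂ) * I) * ((Real.sqrt 2 : ℝ) : ℂ)⁻¹) * Gf β t x c) := by
  rw [psiinit_decomp α γ, qwGauge_iter]
  have h2 : (qwStep (USU 0 β 0))^[t] (psin α γ) = fun x c =>
      (I * ((Real.sqrt 2 : ℝ) : ℂ)⁻¹) * Ff β t x c +
        (exp (-((α + γ : ℝ) : ℂ) * I) * ((Real.sqrt 2 : ℝ) : ℂ)⁻¹) * Gf β t x c := by
    unfold psin
    rw [qwStep_lin_iter]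
    rfl
  rw [h2]

noncomputable def Efun (β : ℝ) (t : ℕ) (x : ℤ) : ℝ :=
  ∑ c : Fin 2, (((Ff β t x c).re) ^ 2 + ((Gf β t x c).re) ^ 2) / 2

noncomputable def Ofun (β : ℝ) (t : ℕ) (x : ℤ) : ℝ :=
  ∑ c : Fin 2, (Ff β t x c).re * (Gf β t x c).re

lemma prob_fml (α β γ : ℝ) (t : ℕ) (x : ℤ) :
    prob ((qwStep (USU α β γ))^[t] ψinit) x
      = Efun β t x - Real.sin (α + γ) * Ofun β t x := by
  have hF : ∀ c, Ff β t x c = (((Ff β t x c).re : ℝ) : ℂ) := by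
    intro c
    apply Complex.ext
    · simp
    · simp [Ff_real β t x c]
  have hG : ∀ c, Gf β t x c = (((Gf β t x c).re : ℝ) : ℂ) := by
    intro c
    apply Complex.ext
    · simp
    · simp [Gf_real β t x c]
  have hph : ∀ (y : ℤ) (cn : ℕ), ‖ph α γ y cn‖ = 1 := by
    intro y cn
    rw [ph, Complex.norm_exp_ofReal_mul_I]
  rw [prob, amp]
  rw [Fin.sum_univ_two]
  beta_reduce
  rw [hF 0, hF 1, hG 0, hG 1]
  simp only [norm_mul, mul_pow, hph, one_pow, one_mul]
  rw [norm_formula, norm_formula, Efun, Ofun, Fin.sum_univ_two, Fin.sum_univ_two]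
  ring

lemma Efun_neg (β : ℝ) (t : ℕ) (x : ℤ) : Efun β t (-x) = Efun β t x := by
  have hG : ∀ (y : ℤ), Gf β t y 0 = -Ff β t (-y) 1 ∧ Gf β t y 1 = Ff β t (-y) 0 := by
    intro y
    rw [Gf_eq_Sw]
    exact ⟨Sw_apply0 _ _, Sw_apply1 _ _⟩
  rw [Efun, Efun, Fin.sum_univ_two, Fin.sum_univ_two,
    (hG (-x)).1, (hG (-x)).2, (hG x).1, (hG x).2, neg_neg]
  simp only [Complex.neg_re]
  ring

lemma Ofun_neg (β : ℝ) (t : ℕ) (x : ℤ) : Ofun β t (-x) = -Ofun β t x := by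
  have hG : ∀ (y : ℤ), Gf β t y 0 = -Ff β t (-y) 1 ∧ Gf β t y 1 = Ff β t (-y) 0 := by
    intro y
    rw [Gf_eq_Sw]
    exact ⟨Sw_apply0 _ _, Sw_apply1 _ _⟩
  rw [Ofun, Ofun, Fin.sum_univ_two, Fin.sum_univ_two,
    (hG (-x)).1, (hG (-x)).2, (hG x).1, (hG x).2, neg_neg]
  simp only [Complex.neg_re]
  ring

lemma Ff_supp (β : ℝ) (t : ℕ) (x : ℤ) (h : (t : ℤ) < |x|) : Ff β t x = 0 := by
  apply qwStep_supp
  · intro y hy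
    simp [phi0, hy]
  · exact h

lemma Gf_supp (β : ℝ) (t : ℕ) (x : ℤ) (h : (t : ℤ) < |x|) : Gf β t x = 0 := by
  apply qwStep_supp
  · intro y hy
    simp [phi1, hy]
  · exact h

lemma Efun_supp (β : ℝ) (t : ℕ) (x : ℤ) (h : (t : ℤ) < |x|) : Efun β t x = 0 := by
  rw [Efun, Fin.sum_univ_two, Ff_supp β t x h, Gf_supp β t x h]
  simp

lemma Ofun_supp (β : ℝ) (t : ℕ) (x : ℤ) (h : (t : ℤ) < |x|) : Ofun β t x = 0 := by
  rw [Ofun, Fin.sum_univ_two, Ff_supp β t x h, Gf_supp β t x h]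
  simp

lemma summable_subtype (f : ℤ → ℝ) (N : ℕ) (h : ∀ x : ℤ, (N : ℤ) < |x| → f x = 0)
    (p : ℤ → Prop) [DecidablePred p] : Summable (fun x : {x : ℤ // p x} => f x.val) := by
  apply summable_of_ne_finset_zero (s := (Finset.Icc (-(N : ℤ)) N).subtype p)
  intro b hb
  apply h
  rw [Finset.mem_subtype, Finset.mem_Icc] at hb
  rcases abs_cases (b : ℤ) with ⟨e1, e2⟩ | ⟨e1, e2⟩ <;> omega

def negEquiv : {x : ℤ // x < 0} ≃ {x : ℤ // 0 < x} where
  toFun x := ⟨-x.1, by have := x.2; omega⟩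
  invFun x := ⟨-x.1, by have := x.2; omega⟩
  left_inv x := by apply Subtype.ext; simp
  right_inv x := by apply Subtype.ext; simp

set_option maxHeartbeats 1000000 in
lemma master (α β γ : ℝ) (t : ℕ) :
    PR ((qwStep (USU α β γ))^[t] ψinit) - PL ((qwStep (USU α β γ))^[t] ψinit)
      = (-2 * ∑' x : {x : ℤ // 0 < x}, Ofun β t x.val) * Real.sin (α + γ) := by
  have sEp := summable_subtype (Efun β t) t (Efun_supp β t) (fun x => 0 < x)
  have sEm := summable_subtype (Efun β t) t (Efun_supp β t) (fun x => x < 0)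
  have sOp := summable_subtype (Ofun β t) t (Ofun_supp β t) (fun x => 0 < x)
  have sOm := summable_subtype (Ofun β t) t (Ofun_supp β t) (fun x => x < 0)
  have e1 : PR ((qwStep (USU α β γ))^[t] ψinit)
      = (∑' x : {x : ℤ // 0 < x}, Efun β t x.val)
        - Real.sin (α + γ) * ∑' x : {x : ℤ // 0 < x}, Ofun β t x.val := by
    rw [PR]
    rw [show (fun x : {x : ℤ // 0 < x} => prob ((qwStep (USU α β γ))^[t] ψinit) x.val)
        = (fun x : {x : ℤ // 0 < x} => Efun β t x.val - Real.sin (α + γ) * Ofun β t x.val)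
      from funext fun x => prob_fml α β γ t x.val]
    rw [Summable.tsum_sub sEp ((sOp.mul_left (Real.sin (α + γ)))), tsum_mul_left]
  have e2 : PL ((qwStep (USU α β γ))^[t] ψinit)
      = (∑' x : {x : ℤ // x < 0}, Efun β t x.val)
        - Real.sin (α + γ) * ∑' x : {x : ℤ // x < 0}, Ofun β t x.val := by
    rw [PL]
    rw [show (fun x : {x : ℤ // x < 0} => prob ((qwStep (USU α β γ))^[t] ψinit) x.val)
        = (fun x : {x : ℤ // x < 0} => Efun β t x.val - Real.sin (α + γ) * Ofun β t x.val)
      from funext fun x => prob_fml α β γ t x.val]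
    rw [Summable.tsum_sub sEm ((sOm.mul_left (Real.sin (α + γ)))), tsum_mul_left]
  have eE : (∑' x : {x : ℤ // x < 0}, Efun β t x.val)
      = ∑' x : {x : ℤ // 0 < x}, Efun β t x.val := by
    rw [← Equiv.tsum_eq negEquiv (fun x : {x : ℤ // 0 < x} => Efun β t x.val)]
    exact tsum_congr (fun x => by
      show Efun β t x.val = Efun β t (-x.val)
      rw [Efun_neg])
  have eO : (∑' x : {x : ℤ // x < 0}, Ofun β t x.val)
      = -∑' x : {x : ℤ // 0 < x}, Ofun β t x.val := by
    rw [← Equiv.tsum_eq negEquiv (fun x : {x : ℤ // 0 < x} => Ofun β t x.val), ← tsum_neg]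
    exact tsum_congr (fun x => by
      show Ofun β t x.val = -Ofun β t (-x.val)
      rw [Ofun_neg, neg_neg])
  rw [e1, e2, eE, eO]
  ring



theorem PR_sub_PL_eq_M_sin :
    ∃ M : ℝ → ℕ → ℝ, ∀ (α β γ : ℝ) (t : ℕ),
      PR ((qwStep (USU α β γ))^[t] ψinit) - PL ((qwStep (USU α β γ))^[t] ψinit) =
        M β t * Real.sin (α + γ) := by
  exact ⟨fun β t => -2 * ∑' x : {x : ℤ // 0 < x}, Ofun β t x.val,
    fun α β γ t => master α β γ t⟩
end

section
/- If two coins U_A = U^S(α_A,β,γ_A) and U_B = U^S(α_B,β,γ_B) satisfy α_A + γ_A = α_B + γ_B, then for the initial state (1/√2)|0⟩(|↓⟩ + i|↑⟩) the quantity P_R − P_L after t steps is the same for the walk with coin U_A as for the walk with coin U_B. -/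
open Complex

/-- A local gauge transformation multiplying the amplitude at site `x` by `e^{iax}`. -/
noncomputable def qwGauge_s15 (a : ℝ) (ψ : ℤ → Fin 2 → ℂ) : ℤ → Fin 2 → ℂ :=
  fun x c => exp (((a * (x : ℝ) : ℝ) : ℂ) * I) * ψ x c

lemma qwExpE (r s : ℝ) : exp ((r : ℂ) * I) * exp ((s : ℂ) * I)
    = exp (((r + s : ℝ) : ℂ) * I) := by
  rw [← exp_add]; push_cast; ring_nf

lemma qwGauge_comm (β αA γA αB γB : ℝ) (h : αA + γA = αB + γB) (ψ : ℤ → Fin 2 → ℂ) :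
    qwStep (USU αB β γB) (qwGauge_s15 (αB - αA) ψ)
      = qwGauge_s15 (αB - αA) (qwStep (USU αA β γA) ψ) := by
  funext x c
  set a := αB - αA with ha
  fin_cases c
  · have h1 : exp ((αB : ℂ) * I) * exp (((a * ((x - 1 : ℤ) : ℝ) : ℝ) : ℂ) * I)
        = exp (((a * (x : ℝ) : ℝ) : ℂ) * I) * exp ((αA : ℂ) * I) := by
      rw [qwExpE, qwExpE]
      have : αB + a * ((x - 1 : ℤ) : ℝ) = a * (x : ℝ) + αA := by
        push_cast; rw [ha]; ring
      rw [this]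
    have h2 : exp (-(γB : ℂ) * I) * exp (((a * ((x - 1 : ℤ) : ℝ) : ℝ) : ℂ) * I)
        = exp (((a * (x : ℝ) : ℝ) : ℂ) * I) * exp (-(γA : ℂ) * I) := by
      rw [show (-(γB : ℂ)) = ((-γB : ℝ) : ℂ) by push_cast; ring,
          show (-(γA : ℂ)) = ((-γA : ℝ) : ℂ) by push_cast; ring, qwExpE, qwExpE]
      have : -γB + a * ((x - 1 : ℤ) : ℝ) = a * (x : ℝ) + -γA := by
        push_cast; rw [ha]; linarith
      rw [this]
    simp only [qwStep, qwGauge_s15, USU, Matrix.mulVec, dotProduct, Fin.sum_univ_two,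
      Matrix.cons_val', Matrix.cons_val_zero, Matrix.cons_val_one, Matrix.head_cons,
      Matrix.head_fin_const, Matrix.empty_val', Matrix.cons_val_fin_one]
    norm_num
    push_cast at h1 h2 ⊢
    simp only [Complex.ofReal_cos, Complex.ofReal_sin, neg_mul] at h1 h2 ⊢
    linear_combination (ψ (x - 1) 0 * (Complex.cos (β:ℂ))) * h1
      - (ψ (x - 1) 1 * (Complex.sin (β:ℂ))) * h2
  · have h1 : exp ((γB : ℂ) * I) * exp (((a * ((x + 1 : ℤ) : ℝ) : ℝ) : ℂ) * I)
        = exp (((a * (x : ℝ) : ℝ) : ℂ) * I) * exp ((γA : ℂ) * I) := by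
      rw [qwExpE, qwExpE]
      have : γB + a * ((x + 1 : ℤ) : ℝ) = a * (x : ℝ) + γA := by
        push_cast; rw [ha]; linarith
      rw [this]
    have h2 : exp (-(αB : ℂ) * I) * exp (((a * ((x + 1 : ℤ) : ℝ) : ℝ) : ℂ) * I)
        = exp (((a * (x : ℝ) : ℝ) : ℂ) * I) * exp (-(αA : ℂ) * I) := by
      rw [show (-(αB : ℂ)) = ((-αB : ℝ) : ℂ) by push_cast; ring,
          show (-(αA : ℂ)) = ((-αA : ℝ) : ℂ) by push_cast; ring, qwExpE, qwExpE]
      have : -αB + a * ((x + 1 : ℤ) : ℝ) = a * (x : ℝ) + -αA := by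
        push_cast; rw [ha]; ring
      rw [this]
    simp only [qwStep, qwGauge_s15, USU, Matrix.mulVec, dotProduct, Fin.sum_univ_two,
      Matrix.cons_val', Matrix.cons_val_zero, Matrix.cons_val_one, Matrix.head_cons,
      Matrix.head_fin_const, Matrix.empty_val', Matrix.cons_val_fin_one]
    norm_num
    push_cast at h1 h2 ⊢
    simp only [Complex.ofReal_cos, Complex.ofReal_sin, neg_mul] at h1 h2 ⊢
    linear_combination (ψ (x + 1) 0 * (Complex.sin (β:ℂ))) * h1
      + (ψ (x + 1) 1 * (Complex.cos (β:ℂ))) * h2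

lemma qwGauge_psinit (a : ℝ) : qwGauge_s15 a ψinit = ψinit := by
  funext x c
  by_cases hx : x = 0 <;> simp [qwGauge_s15, ψinit, hx]

lemma qwGauge_iterate (β αA γA αB γB : ℝ) (h : αA + γA = αB + γB) (t : ℕ) :
    (qwStep (USU αB β γB))^[t] ψinit
      = qwGauge_s15 (αB - αA) ((qwStep (USU αA β γA))^[t] ψinit) := by
  induction t with
  | zero => simp [qwGauge_psinit]
  | succ n ih =>
      rw [Function.iterate_succ_apply', Function.iterate_succ_apply', ih,
        qwGauge_comm β αA γA αB γB h]

lemma prob_qwGauge (a : ℝ) (ψ : ℤ → Fin 2 → ℂ) (x : ℤ) :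
    prob (qwGauge_s15 a ψ) x = prob ψ x := by
  simp [prob, qwGauge_s15, norm_mul, Complex.norm_exp]

lemma PR_qwGauge (a : ℝ) (ψ : ℤ → Fin 2 → ℂ) : PR (qwGauge_s15 a ψ) = PR ψ := by
  unfold PR; exact tsum_congr fun x => prob_qwGauge a ψ x

lemma PL_qwGauge (a : ℝ) (ψ : ℤ → Fin 2 → ℂ) : PL (qwGauge_s15 a ψ) = PL ψ := by
  unfold PL; exact tsum_congr fun x => prob_qwGauge a ψ x

theorem PR_sub_PL_depends_only_on_sum (β αA γA αB γB : ℝ) (h : αA + γA = αB + γB)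
    (t : ℕ) :
    PR ((qwStep (USU αA β γA))^[t] ψinit) - PL ((qwStep (USU αA β γA))^[t] ψinit) =
    PR ((qwStep (USU αB β γB))^[t] ψinit) - PL ((qwStep (USU αB β γB))^[t] ψinit) := by
  rw [qwGauge_iterate β αA γA αB γB h t, PR_qwGauge, PL_qwGauge]
end
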